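/- For independent Bernoulli(p) random variables (ε_{i,j}), β > 0, and γ = β/(2Np), the expectation E[e^{-βH(σ)} · βH(τ)] equals -E[e^{-βH(σ)}] · Σ_{k,l=1}^N (β/(2N)) τ_k τ_l e^{γ σ_k σ_l} / (1 - p + p e^{γ σ_k σ_l}), for all σ, τ ∈ {-1,+1}^N. -/

import Mathlib

open MeasureTheory ProbabilityTheory

lemma integral_prod_of_iIndepFun' {Ω ι : Type*} [MeasurableSpace Ω] {μ : Measure Ω}
    [IsProbabilityMeasure μ] (f : ι → Ω → ℝ)
    (hindep : iIndepFun f μ) (hmeas : ∀ i, Measurable (f i))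
    (s : Finset ι) :
    ∫ ω, ∏ j ∈ s, f j ω ∂μ = ∏ j ∈ s, ∫ ω, f j ω ∂μ := by
  classical
  induction s using Finset.induction_on with
  | empty => simp
  | @insert i s hi ih =>
    have hip : IndepFun (f i) (∏ j ∈ s, f j) μ :=
      (hindep.indepFun_finsetProd_of_notMem hmeas hi).symm
    have h2 : (∫ ω, f i ω * (∏ j ∈ s, f j) ω ∂μ)
        = (∫ ω, f i ω ∂μ) * ∫ ω, (∏ j ∈ s, f j) ω ∂μ :=
      hip.integral_fun_mul_eq_mul_integral (hmeas i).aestronglyMeasurable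
        (by rw [Finset.prod_fn]; exact (s.measurable_prod fun j _ => hmeas j).aestronglyMeasurable)
    simp only [Finset.prod_apply] at h2
    simp_rw [Finset.prod_insert hi]
    rw [h2, ih]

theorem expectation_exp_hamiltonian_mul_hamiltonian
    {Ω : Type*} [MeasureSpace Ω] [IsProbabilityMeasure (ℙ : Measure Ω)]
    (N : ℕ) (hN : 0 < N) (p : ℝ) (hp : 0 < p) (hp1 : p ≤ 1) (β : ℝ) (hβ : 0 < β)
    (γ : ℝ) (hγ : γ = β / (2 * N * p))
    (ε : Fin N × Fin N → Ω → ℝ)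
    (hmeas : ∀ k, Measurable (ε k))
    (hval : ∀ k, ∀ᵐ ω ∂ℙ, ε k ω = 0 ∨ ε k ω = 1)
    (hmean : ∀ k, ∫ ω, ε k ω ∂ℙ = p)
    (hindep : iIndepFun ε ℙ)
    (σ τ : Fin N → ℝ) (hσ : ∀ i, σ i = 1 ∨ σ i = -1) (hτ : ∀ i, τ i = 1 ∨ τ i = -1)
    (H : (Fin N → ℝ) → Ω → ℝ)
    (hH : ∀ ρ ω, H ρ ω = -(1 / (2 * N * p)) * ∑ i : Fin N, ∑ j : Fin N, ρ i * ρ j * ε (i, j) ω) :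
    ∫ ω, Real.exp (-β * H σ ω) * (β * H τ ω) ∂ℙ
      = -(∫ ω, Real.exp (-β * H σ ω) ∂ℙ) *
          ∑ k : Fin N, ∑ l : Fin N,
            (β / (2 * N)) * τ k * τ l * Real.exp (γ * σ k * σ l)
              / (1 - p + p * Real.exp (γ * σ k * σ l)) := by
  classical
  have hN' : (N : ℝ) ≠ 0 := Nat.cast_ne_zero.mpr hN.ne'
  have hp' : p ≠ 0 := hp.ne'
  -- key scalars
  set a : Fin N × Fin N → ℝ := fun m => γ * σ m.1 * σ m.2 with ha
  set d : Fin N × Fin N → ℝ := fun m => 1 - p + p * Real.exp (a m) with hd_def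
  have hd : ∀ m, 0 < d m := by
    intro m
    have h := Real.exp_pos (a m)
    simp only [hd_def]
    nlinarith
  -- the factor functions
  set F : Fin N × Fin N → Ω → ℝ := fun m ω => Real.exp (a m * ε m ω) with hF
  have hFmeas : ∀ m, Measurable (F m) := fun m => ((hmeas m).const_mul (a m)).exp
  have hFindep : iIndepFun F ℙ :=
    hindep.comp (fun m x => Real.exp (a m * x))
      (fun m => (measurable_id.const_mul (a m)).exp)
  -- γ relation
  have hγ' : β * (1 / (2 * (N : ℝ) * p)) = γ := by rw [hγ]; field_simp
  -- exponential factorization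
  have hexp : ∀ ω, Real.exp (-β * H σ ω) = ∏ m : Fin N × Fin N, F m ω := by
    intro ω
    rw [hH]
    have h1 : -β * (-(1 / (2 * (N:ℝ) * p)) * ∑ i : Fin N, ∑ j : Fin N, σ i * σ j * ε (i, j) ω)
        = ∑ m : Fin N × Fin N, a m * ε m ω := by
      rw [Fintype.sum_prod_type]
      have : -β * (-(1 / (2 * (N:ℝ) * p)) * ∑ i : Fin N, ∑ j : Fin N, σ i * σ j * ε (i, j) ω)
          = γ * ∑ i : Fin N, ∑ j : Fin N, σ i * σ j * ε (i, j) ω := by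
        rw [← hγ']; ring
      rw [this, Finset.mul_sum]
      refine Finset.sum_congr rfl fun i _ => ?_
      rw [Finset.mul_sum]
      exact Finset.sum_congr rfl fun j _ => by simp only [ha]; ring
    rw [h1, Real.exp_sum]
  -- β H τ as a sum
  have hHτ : ∀ ω, β * H τ ω = -∑ m : Fin N × Fin N, (γ * τ m.1 * τ m.2) * ε m ω := by
    intro ω
    rw [hH]
    rw [Fintype.sum_prod_type]
    have : β * (-(1 / (2 * (N:ℝ) * p)) * ∑ i : Fin N, ∑ j : Fin N, τ i * τ j * ε (i, j) ω)
        = -(γ * ∑ i : Fin N, ∑ j : Fin N, τ i * τ j * ε (i, j) ω) := by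
      rw [← hγ']; ring
    rw [this, Finset.mul_sum]
    congr 1
    refine Finset.sum_congr rfl fun i _ => ?_
    rw [Finset.mul_sum]
    exact Finset.sum_congr rfl fun j _ => by ring
  -- integrability of ε
  have hεint : ∀ m, Integrable (ε m) ℙ := by
    intro m
    refine (integrable_const (1 : ℝ)).mono' (hmeas m).aestronglyMeasurable ?_
    filter_upwards [hval m] with ω hω
    rcases hω with h | h <;> simp [h]
  -- Bernoulli moments
  have hEF : ∀ m, ∫ ω, F m ω ∂ℙ = d m := by
    intro m
    have hae : ∀ᵐ ω ∂ℙ, F m ω = 1 + (Real.exp (a m) - 1) * ε m ω := by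
      filter_upwards [hval m] with ω hω
      rcases hω with h | h <;> simp [hF, h]
    rw [integral_congr_ae hae, integral_add (integrable_const 1) ((hεint m).const_mul _),
      integral_const_mul, hmean m]
    simp only [integral_const, measure_univ, probReal_univ, ENNReal.toReal_one, smul_eq_mul, one_mul, hd_def]
    ring
  have hEFε : ∀ m, ∫ ω, F m ω * ε m ω ∂ℙ = p * Real.exp (a m) := by
    intro m
    have hae : ∀ᵐ ω ∂ℙ, F m ω * ε m ω = Real.exp (a m) * ε m ω := by
      filter_upwards [hval m] with ω hω
      rcases hω with h | h <;> simp [hF, h]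
    rw [integral_congr_ae hae, integral_const_mul, hmean m]
    ring
  -- product integral
  have hP : ∫ ω, ∏ m : Fin N × Fin N, F m ω ∂ℙ = ∏ m : Fin N × Fin N, d m := by
    rw [integral_prod_of_iIndepFun' F hFindep hFmeas]
    exact Finset.prod_congr rfl fun m _ => hEF m
  set P : ℝ := ∏ m : Fin N × Fin N, d m with hPdef
  have hPerase : ∀ m0 : Fin N × Fin N,
      ∏ m ∈ Finset.univ.erase m0, d m = P / d m0 := by
    intro m0
    rw [hPdef, ← Finset.mul_prod_erase Finset.univ d (Finset.mem_univ m0), mul_comm,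
      mul_div_assoc, div_self (hd m0).ne', mul_one]
  -- product times one ε
  have hPε : ∀ m0 : Fin N × Fin N,
      ∫ ω, (∏ m : Fin N × Fin N, F m ω) * ε m0 ω ∂ℙ
        = (p * Real.exp (a m0)) * (P / d m0) := by
    intro m0
    set G : Fin N × Fin N → Ω → ℝ :=
      fun m => (fun x => if m = m0 then Real.exp (a m * x) * x else Real.exp (a m * x)) ∘ ε m
      with hG
    have hGmeas : ∀ m, Measurable (G m) := by
      intro m
      refine Measurable.comp ?_ (hmeas m)
      split_ifs
      · exact (measurable_id.const_mul (a m)).exp.mul measurable_id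
      · exact (measurable_id.const_mul (a m)).exp
    have hGindep : iIndepFun G ℙ :=
      hindep.comp _ fun m => by
        split_ifs
        · exact (measurable_id.const_mul (a m)).exp.mul measurable_id
        · exact (measurable_id.const_mul (a m)).exp
    have hpt : ∀ ω, (∏ m : Fin N × Fin N, F m ω) * ε m0 ω = ∏ m : Fin N × Fin N, G m ω := by
      intro ω
      rw [← Finset.mul_prod_erase Finset.univ (fun m => F m ω) (Finset.mem_univ m0),
        ← Finset.mul_prod_erase Finset.univ (fun m => G m ω) (Finset.mem_univ m0)]
      have h1 : G m0 ω = F m0 ω * ε m0 ω := by simp [hG, hF]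
      have h2 : ∀ m ∈ Finset.univ.erase m0, G m ω = F m ω := by
        intro m hm
        have : m ≠ m0 := (Finset.mem_erase.mp hm).1
        simp [hG, hF, this]
      rw [h1, Finset.prod_congr rfl h2]
      ring
    have hGm0 : ∫ ω, G m0 ω ∂ℙ = p * Real.exp (a m0) := by
      have : ∀ ω, G m0 ω = F m0 ω * ε m0 ω := by intro ω; simp [hG, hF]
      simp_rw [this]
      exact hEFε m0
    calc ∫ ω, (∏ m : Fin N × Fin N, F m ω) * ε m0 ω ∂ℙ
        = ∫ ω, ∏ m : Fin N × Fin N, G m ω ∂ℙ := by simp_rw [hpt]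
      _ = ∏ m : Fin N × Fin N, ∫ ω, G m ω ∂ℙ :=
          integral_prod_of_iIndepFun' G hGindep hGmeas _
      _ = (∫ ω, G m0 ω ∂ℙ) * ∏ m ∈ Finset.univ.erase m0, ∫ ω, G m ω ∂ℙ :=
          (Finset.mul_prod_erase Finset.univ _ (Finset.mem_univ m0)).symm
      _ = (p * Real.exp (a m0)) * (P / d m0) := by
          rw [hGm0, ← hPerase m0]
          congr 1
          refine Finset.prod_congr rfl fun m hm => ?_
          have hne : m ≠ m0 := (Finset.mem_erase.mp hm).1
          have : ∀ ω, G m ω = F m ω := by intro ω; simp [hG, hF, hne]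
          simp_rw [this]
          exact hEF m
  -- integrability of the product times ε
  have hint_term : ∀ m0 : Fin N × Fin N,
      Integrable (fun ω => (∏ m : Fin N × Fin N, F m ω) * ε m0 ω) ℙ := by
    intro m0
    refine (integrable_const ((Real.exp |γ|) ^ Fintype.card (Fin N × Fin N))).mono'
      ((Finset.measurable_prod _ fun m _ => hFmeas m).mul (hmeas m0)).aestronglyMeasurable ?_
    have hall : ∀ᵐ ω ∂ℙ, ∀ m, ε m ω = 0 ∨ ε m ω = 1 := ae_all_iff.mpr hval
    filter_upwards [hall] with ω hω
    have h1 : |ε m0 ω| ≤ 1 := by rcases hω m0 with h | h <;> simp [h]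
    have h2 : ∀ m : Fin N × Fin N, |F m ω| ≤ Real.exp |γ| := by
      intro m
      have habs : |a m| = |γ| := by
        have e1 : |σ m.1| = 1 := by rcases hσ m.1 with h | h <;> simp [h]
        have e2 : |σ m.2| = 1 := by rcases hσ m.2 with h | h <;> simp [h]
        simp [ha, abs_mul, e1, e2]
      have hle : a m * ε m ω ≤ |γ| := by
        rcases hω m with h | h
        · rw [h, mul_zero]; exact abs_nonneg γ
        · rw [h, mul_one, ← habs]; exact le_abs_self _
      rw [hF, abs_of_pos (Real.exp_pos _)]
      exact Real.exp_le_exp.mpr hle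
    calc ‖(∏ m : Fin N × Fin N, F m ω) * ε m0 ω‖
        = (∏ m : Fin N × Fin N, |F m ω|) * |ε m0 ω| := by
          rw [Real.norm_eq_abs, abs_mul, Finset.abs_prod]
      _ ≤ (∏ _m : Fin N × Fin N, Real.exp |γ|) * 1 := by
          refine mul_le_mul ?_ h1 (abs_nonneg _) ?_
          · exact Finset.prod_le_prod (fun m _ => abs_nonneg _) (fun m _ => h2 m)
          · positivity
      _ = (Real.exp |γ|) ^ Fintype.card (Fin N × Fin N) := by
          rw [Finset.prod_const, mul_one, Finset.card_univ]
  -- main computation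
  have hLHS : ∫ ω, Real.exp (-β * H σ ω) * (β * H τ ω) ∂ℙ
      = ∑ m : Fin N × Fin N, (-(γ * τ m.1 * τ m.2)) *
          ∫ ω, (∏ m' : Fin N × Fin N, F m' ω) * ε m ω ∂ℙ := by
    have hpt : ∀ ω, Real.exp (-β * H σ ω) * (β * H τ ω)
        = ∑ m : Fin N × Fin N, (-(γ * τ m.1 * τ m.2)) *
            ((∏ m' : Fin N × Fin N, F m' ω) * ε m ω) := by
      intro ω
      rw [hexp ω, hHτ ω, mul_neg, Finset.mul_sum, ← Finset.sum_neg_distrib]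
      exact Finset.sum_congr rfl fun m _ => by ring
    simp_rw [hpt]
    rw [integral_finset_sum _ fun m _ => (hint_term m).const_mul _]
    exact Finset.sum_congr rfl fun m _ => integral_const_mul _ _
  have hEexp : ∫ ω, Real.exp (-β * H σ ω) ∂ℙ = P := by
    simp_rw [hexp]; rw [hP]
  rw [hLHS, hEexp, Fintype.sum_prod_type]
  rw [Finset.mul_sum]
  refine Finset.sum_congr rfl fun k _ => ?_
  rw [Finset.mul_sum]
  refine Finset.sum_congr rfl fun l _ => ?_
  rw [hPε (k, l)]
  have hdne : (1 - p + p * Real.exp (γ * σ k * σ l)) ≠ 0 := (hd (k, l)).ne'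
  have hγp : γ * p = β / (2 * (N : ℝ)) := by rw [hγ]; field_simp
  simp only [ha, hd_def]
  linear_combination
    (-(τ k * τ l * Real.exp (γ * σ k * σ l) * P /
      (1 - p + p * Real.exp (γ * σ k * σ l)))) * hγp
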